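/- Let k be even, k ≥ 2, and let Q^k(t) = Im((t+i)^k). Then Q^k(t)/t is a polynomial in t^2, Q^k has 0 as a root, and it has exactly (k-2)/2 positive real roots and (k-2)/2 negative real roots. -/

import Mathlib

open Polynomial

/-- The real polynomial `Q^k(t) = ∑_{h=0}^{⌊k/2⌋} (-1)^h C(k, 2h+1) t^{k-1-2h}`. -/
noncomputable def QR (k : ℕ) : Polynomial ℝ :=
  ∑ h ∈ Finset.range (k / 2 + 1),
    Polynomial.C ((-1 : ℝ) ^ h * (k.choose (2 * h + 1) : ℝ)) * Polynomial.X ^ (k - 1 - 2 * h)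

private lemma sum_range_two_mul (f : ℕ → ℝ) (n : ℕ) :
    ∑ i ∈ Finset.range (2 * n), f i = ∑ h ∈ Finset.range n, (f (2 * h) + f (2 * h + 1)) := by
  induction n with
  | zero => simp
  | succ n ih =>
    have : 2 * (n + 1) = (2 * n + 1) + 1 := by ring
    rw [this, Finset.sum_range_succ, Finset.sum_range_succ, ih, Finset.sum_range_succ,
      add_assoc]

private lemma QR_eval (k : ℕ) (hk : Even k) (hk0 : k ≠ 0) (t : ℝ) :
    (QR k).eval t = ((Complex.I + (t : ℂ)) ^ k).im := by
  rw [add_pow]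
  rw [Complex.im_sum]
  have hterm : ∀ m ∈ Finset.range (k + 1),
      (Complex.I ^ m * (t : ℂ) ^ (k - m) * (k.choose m : ℂ)).im
        = (t ^ (k - m) * (k.choose m : ℝ)) * (Complex.I ^ m).im := by
    intro m _
    have : Complex.I ^ m * (t : ℂ) ^ (k - m) * (k.choose m : ℂ)
        = ((t ^ (k - m) * (k.choose m : ℝ) : ℝ) : ℂ) * Complex.I ^ m := by
      push_cast; ring
    rw [this, Complex.im_ofReal_mul]
  rw [Finset.sum_congr rfl hterm]
  -- extend the range to `k + 2 = 2 * (k / 2 + 1)`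
  have hck : k.choose (k + 1) = 0 := Nat.choose_eq_zero_of_lt (by omega)
  have hext : ∑ m ∈ Finset.range (k + 2),
      (t ^ (k - m) * (k.choose m : ℝ)) * (Complex.I ^ m).im
      = ∑ m ∈ Finset.range (k + 1),
      (t ^ (k - m) * (k.choose m : ℝ)) * (Complex.I ^ m).im := by
    rw [Finset.sum_range_succ, hck]; simp
  rw [← hext]
  have h2 : k + 2 = 2 * (k / 2 + 1) := by obtain ⟨n, hn⟩ := hk; omega
  rw [h2, sum_range_two_mul]
  have hIeven : ∀ h : ℕ, (Complex.I ^ (2 * h)).im = 0 := by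
    intro h
    rw [pow_mul, Complex.I_sq]
    have : ((-1 : ℂ)) ^ h = (((-1 : ℝ) ^ h : ℝ) : ℂ) := by push_cast; ring
    rw [this, Complex.ofReal_im]
  have hIodd : ∀ h : ℕ, (Complex.I ^ (2 * h + 1)).im = (-1 : ℝ) ^ h := by
    intro h
    rw [pow_succ, pow_mul, Complex.I_sq]
    have : ((-1 : ℂ)) ^ h * Complex.I = (((-1 : ℝ) ^ h : ℝ) : ℂ) * Complex.I := by
      push_cast; ring
    rw [this, Complex.im_ofReal_mul, Complex.I_im, mul_one]
  simp only [QR, eval_finset_sum, eval_mul, eval_C, eval_pow, eval_X]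
  refine Finset.sum_congr rfl fun h _ => ?_
  rw [hIeven, hIodd, mul_zero, zero_add]
  have he : k - (2 * h + 1) = k - 1 - 2 * h := by omega
  rw [he]; ring

private lemma root_aux (k m : ℕ) (h1 : 1 ≤ m) (hm : m < k) (hk : Even k) :
    (QR k).IsRoot (Real.cos (m * Real.pi / k) / Real.sin (m * Real.pi / k)) := by
  have hkpos : (0 : ℝ) < k := by exact_mod_cast (by omega : 0 < k)
  have hk0 : (k : ℝ) ≠ 0 := hkpos.ne'
  set θ : ℝ := m * Real.pi / k with hθ
  have hθpos : 0 < θ := by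
    apply div_pos (by positivity) hkpos
  have hθlt : θ < Real.pi := by
    rw [hθ, div_lt_iff₀ hkpos]
    have : (m : ℝ) < k := by exact_mod_cast hm
    nlinarith [Real.pi_pos]
  have hs : 0 < Real.sin θ := Real.sin_pos_of_pos_of_lt_pi hθpos hθlt
  unfold IsRoot
  rw [QR_eval k hk (by omega)]
  have hsne : ((Real.sin θ : ℝ) : ℂ) ≠ 0 := Complex.ofReal_ne_zero.2 hs.ne'
  have key : Complex.I + ((Real.cos θ / Real.sin θ : ℝ) : ℂ)
      = Complex.exp (θ * Complex.I) / (Real.sin θ : ℂ) := by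
    rw [Complex.exp_mul_I, ← Complex.ofReal_cos, ← Complex.ofReal_sin]
    rw [Complex.ofReal_div, eq_div_iff hsne, add_mul, div_mul_cancel₀ _ hsne]
    ring
  rw [key, div_pow, ← Complex.exp_nat_mul]
  have harg : (k : ℂ) * (θ * Complex.I) = ((m * Real.pi : ℝ) : ℂ) * Complex.I := by
    have hk0' : (k : ℂ) ≠ 0 := Nat.cast_ne_zero.2 (by omega)
    rw [hθ]; push_cast; field_simp
  rw [harg]
  have : ((Real.sin θ : ℂ)) ^ k = ((Real.sin θ ^ k : ℝ) : ℂ) := by push_cast; ring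
  rw [this, Complex.div_ofReal_im, Complex.exp_ofReal_mul_I_im]
  rw [Real.sin_nat_mul_pi]
  simp

private lemma QR_coeff (k : ℕ) (hk2 : 2 ≤ k) : (QR k).coeff (k - 1) = k := by
  unfold QR
  rw [finset_sum_coeff]
  have : ∀ h ∈ Finset.range (k / 2 + 1),
      (Polynomial.C ((-1 : ℝ) ^ h * (k.choose (2 * h + 1) : ℝ)) *
        Polynomial.X ^ (k - 1 - 2 * h)).coeff (k - 1)
      = if h = 0 then (k : ℝ) else 0 := by
    intro h _
    rw [coeff_C_mul, coeff_X_pow]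
    rcases Nat.eq_zero_or_pos h with h0 | h0
    · subst h0; simp [Nat.choose_one_right]
    · have hne : ¬ (k - 1 = k - 1 - 2 * h) := by omega
      simp only [hne, if_false, mul_zero]
      rw [if_neg (by omega : ¬ h = 0)]
  rw [Finset.sum_congr rfl this, Finset.sum_ite_eq' (Finset.range (k / 2 + 1)) 0]
  simp

private lemma QR_ne_zero (k : ℕ) (hk2 : 2 ≤ k) : QR k ≠ 0 := fun h => by
  have hc := QR_coeff k hk2
  rw [h, coeff_zero] at hc
  exact (Nat.cast_ne_zero.2 (by omega : k ≠ 0) : (k : ℝ) ≠ 0) hc.symm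

private lemma QR_natDegree_le (k : ℕ) : (QR k).natDegree ≤ k - 1 := by
  apply natDegree_sum_le_of_forall_le
  intro h _
  refine (natDegree_C_mul_le _ _).trans ?_
  simpa using (natDegree_X_pow_le (R := ℝ) (k - 1 - 2 * h)).trans (by omega)

theorem QR_even_odd_function_and_root_count (k : ℕ) (hk : Even k) (hk2 : 2 ≤ k) :
    (∃ R : Polynomial ℝ, QR k = Polynomial.X * R.comp (Polynomial.X ^ 2)) ∧
      (QR k).IsRoot 0 ∧
      ((QR k).roots.filter (fun x => 0 < x)).card = (k - 2) / 2 ∧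
      ((QR k).roots.filter (fun x => x < 0)).card = (k - 2) / 2 := by
  obtain ⟨n, hn⟩ := hk
  have hkn : k = 2 * n := by omega
  have hn1 : 1 ≤ n := by omega
  -- the explicit roots
  set f : ℕ → ℝ := fun m => Real.cos (m * Real.pi / k) / Real.sin (m * Real.pi / k) with hf
  have hθ : ∀ m : ℕ, 1 ≤ m → m < k →
      0 < (m : ℝ) * Real.pi / k ∧ (m : ℝ) * Real.pi / k < Real.pi := by
    intro m h1 h2
    constructor
    · apply div_pos (by positivity) (by positivity)
    · rw [div_lt_iff₀ (by positivity)]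
      have : (m : ℝ) < k := by exact_mod_cast h2
      nlinarith [Real.pi_pos]
  have hsin : ∀ m : ℕ, 1 ≤ m → m < k → 0 < Real.sin ((m : ℝ) * Real.pi / k) := by
    intro m h1 h2
    exact Real.sin_pos_of_pos_of_lt_pi (hθ m h1 h2).1 (hθ m h1 h2).2
  -- injectivity
  have hinj : Set.InjOn f (Finset.Ico 1 k) := by
    intro a ha b hb hab
    simp only [Finset.coe_Ico, Set.mem_Ico] at ha hb
    set α := (a : ℝ) * Real.pi / k with hαdef
    set β := (b : ℝ) * Real.pi / k with hβdef
    have hsa := hsin a ha.1 ha.2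
    have hsb := hsin b hb.1 hb.2
    have hθa := hθ a ha.1 ha.2
    have hθb := hθ b hb.1 hb.2
    have hcross : Real.cos α * Real.sin β = Real.cos β * Real.sin α := by
      have := hab
      simp only [hf] at this
      rw [div_eq_div_iff hsa.ne' hsb.ne'] at this
      exact this
    have hsub : Real.sin (β - α) = 0 := by
      rw [Real.sin_sub]; nlinarith
    have : β - α = 0 := by
      rw [Real.sin_eq_zero_iff_of_lt_of_lt (by linarith [hθa.1, hθb.2])
        (by linarith [hθa.2, hθb.1])] at hsub
      exact hsub
    have hαβ : α = β := by linarith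
    have hk0 : (k : ℝ) ≠ 0 := Nat.cast_ne_zero.2 (by omega)
    have h' : α * k = β * k := by rw [hαβ]
    rw [hαdef, hβdef, div_mul_cancel₀ _ hk0, div_mul_cancel₀ _ hk0] at h'
    have : (a : ℝ) = b := mul_right_cancel₀ Real.pi_ne_zero h'
    exact_mod_cast this
  -- signs
  have hsign : ∀ m : ℕ, 1 ≤ m → m < k → ((0 < f m ↔ m < n) ∧ (f m < 0 ↔ n < m)) := by
    intro m h1 h2
    have hs := hsin m h1 h2
    have hθm := hθ m h1 h2
    have hkpos : (0 : ℝ) < k := by positivity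
    constructor
    · constructor
      · intro hpos
        by_contra hmn
        push_neg at hmn
        have hge : Real.pi / 2 ≤ (m : ℝ) * Real.pi / k := by
          rw [hkn]
          rw [div_le_div_iff₀ (by norm_num) (by positivity)]
          push_cast
          have : (n : ℝ) ≤ m := by exact_mod_cast hmn
          nlinarith [Real.pi_pos]
        have hcos : Real.cos ((m : ℝ) * Real.pi / k) ≤ 0 :=
          Real.cos_nonpos_of_pi_div_two_le_of_le hge (by linarith [hθm.2, Real.pi_pos])
        have : f m ≤ 0 := div_nonpos_of_nonpos_of_nonneg hcos hs.le
        linarith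
      · intro hmn
        have hlt : (m : ℝ) * Real.pi / k < Real.pi / 2 := by
          rw [hkn]
          rw [div_lt_div_iff₀ (by positivity) (by norm_num)]
          push_cast
          have : (m : ℝ) < n := by exact_mod_cast hmn
          nlinarith [Real.pi_pos]
        have hcos : 0 < Real.cos ((m : ℝ) * Real.pi / k) :=
          Real.cos_pos_of_mem_Ioo ⟨by linarith [hθm.1, Real.pi_pos], hlt⟩
        exact div_pos hcos hs
    · constructor
      · intro hneg
        by_contra hmn
        push_neg at hmn
        have hle : (m : ℝ) * Real.pi / k ≤ Real.pi / 2 := by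
          rw [hkn]
          rw [div_le_div_iff₀ (by positivity) (by norm_num)]
          push_cast
          have : (m : ℝ) ≤ n := by exact_mod_cast hmn
          nlinarith [Real.pi_pos]
        have hcos : 0 ≤ Real.cos ((m : ℝ) * Real.pi / k) :=
          Real.cos_nonneg_of_mem_Icc ⟨by linarith [hθm.1, Real.pi_pos], hle⟩
        have : 0 ≤ f m := div_nonneg hcos hs.le
        linarith
      · intro hmn
        have hgt : Real.pi / 2 < (m : ℝ) * Real.pi / k := by
          rw [hkn]
          rw [div_lt_div_iff₀ (by norm_num) (by positivity)]
          push_cast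
          have : (n : ℝ) < m := by exact_mod_cast hmn
          nlinarith [Real.pi_pos]
        have hcos : Real.cos ((m : ℝ) * Real.pi / k) < 0 :=
          Real.cos_neg_of_pi_div_two_lt_of_lt hgt (by linarith [hθm.2, Real.pi_pos])
        exact div_neg_of_neg_of_pos hcos hs
  -- roots of QR
  have hne := QR_ne_zero k hk2
  set S : Finset ℝ := (Finset.Ico 1 k).image f with hS
  have hcardS : S.card = k - 1 := by
    rw [hS, Finset.card_image_of_injOn hinj, Nat.card_Ico]
  have hsub : S.val ⊆ (QR k).roots := by
    intro x hx
    rw [Finset.mem_val, hS, Finset.mem_image] at hx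
    obtain ⟨m, hm, rfl⟩ := hx
    rw [Finset.mem_Ico] at hm
    rw [mem_roots hne]
    exact root_aux k m hm.1 hm.2 ⟨n, hn⟩
  have hle : S.val ≤ (QR k).roots := Finset.val_le_iff_val_subset.2 hsub
  have hcard : Multiset.card (QR k).roots ≤ k - 1 :=
    ((QR k).card_roots').trans (QR_natDegree_le k)
  have hroots : (QR k).roots = S.val := by
    refine (Multiset.eq_of_le_of_card_le hle ?_).symm
    rw [Finset.card_val, hcardS]
    exact hcard
  refine ⟨?_, ?_, ?_, ?_⟩
  · -- odd polynomial
    refine ⟨∑ h ∈ Finset.range (k / 2),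
      Polynomial.C ((-1 : ℝ) ^ h * (k.choose (2 * h + 1) : ℝ)) *
        Polynomial.X ^ (k / 2 - 1 - h), ?_⟩
    unfold QR
    rw [Finset.sum_range_succ]
    have hch : k.choose (2 * (k / 2) + 1) = 0 := by
      apply Nat.choose_eq_zero_of_lt; omega
    rw [hch]
    simp only [Nat.cast_zero, mul_zero, map_zero, zero_mul, add_zero]
    rw [Polynomial.sum_comp, Finset.mul_sum]
    refine Finset.sum_congr rfl fun h hh => ?_
    rw [Finset.mem_range] at hh
    rw [mul_comp, C_comp, pow_comp, X_comp, ← pow_mul]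
    have he : k - 1 - 2 * h = (k / 2 - 1 - h) * 2 + 1 := by omega
    rw [he, pow_succ]
    ring
  · -- root at 0
    unfold IsRoot
    unfold QR
    rw [eval_finset_sum]
    apply Finset.sum_eq_zero
    intro h hh
    rw [Finset.mem_range] at hh
    rcases Nat.lt_or_ge h (k / 2) with hlt | hge
    · have : k - 1 - 2 * h ≠ 0 := by omega
      simp [zero_pow this]
    · have hh2 : h = k / 2 := by omega
      have : k.choose (2 * h + 1) = 0 := by
        apply Nat.choose_eq_zero_of_lt; omega
      simp [this]
  · -- positive roots
    rw [hroots]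
    have : S.val.filter (fun x => 0 < x) = (S.filter (fun x => 0 < x)).val := rfl
    rw [this]
    rw [Finset.card_val]
    have himg : S.filter (fun x => 0 < x) = ((Finset.Ico 1 k).filter (fun m => 0 < f m)).image f := by
      rw [hS, Finset.filter_image]
    rw [himg]
    have : (Finset.Ico 1 k).filter (fun m => 0 < f m) = Finset.Ico 1 n := by
      ext m
      simp only [Finset.mem_filter, Finset.mem_Ico]
      constructor
      · rintro ⟨⟨h1, h2⟩, hpos⟩
        exact ⟨h1, ((hsign m h1 h2).1).1 hpos⟩
      · rintro ⟨h1, h2⟩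
        have h2' : m < k := by omega
        exact ⟨⟨h1, h2'⟩, ((hsign m h1 h2').1).2 h2⟩
    rw [this]
    rw [Finset.card_image_of_injOn (hinj.mono (by
      intro x hx
      simp only [Finset.coe_Ico, Set.mem_Ico] at hx ⊢
      omega))]
    rw [Nat.card_Ico]
    omega
  · -- negative roots
    rw [hroots]
    have : S.val.filter (fun x => x < 0) = (S.filter (fun x => x < 0)).val := rfl
    rw [this, Finset.card_val]
    have himg : S.filter (fun x => x < 0) = ((Finset.Ico 1 k).filter (fun m => f m < 0)).image f := by
      rw [hS, Finset.filter_image]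
    rw [himg]
    have : (Finset.Ico 1 k).filter (fun m => f m < 0) = Finset.Ico (n + 1) k := by
      ext m
      simp only [Finset.mem_filter, Finset.mem_Ico]
      constructor
      · rintro ⟨⟨h1, h2⟩, hneg⟩
        have := ((hsign m h1 h2).2).1 hneg
        exact ⟨by omega, h2⟩
      · rintro ⟨h1, h2⟩
        have h1' : 1 ≤ m := by omega
        exact ⟨⟨h1', h2⟩, ((hsign m h1' h2).2).2 (by omega)⟩
    rw [this]
    rw [Finset.card_image_of_injOn (hinj.mono (by
      intro x hx
      simp only [Finset.coe_Ico, Set.mem_Ico] at hx ⊢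
      omega))]
    rw [Nat.card_Ico]
    omega
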